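/- Let τ ∈ ℂ \ (1/2)ℤ (so q = exp(2πiτ) ≠ ±1) and let λ, α, ρ ∈ ℂ. Define the first order difference operator T on meromorphic functions on ℂ by (Tf)(z) = (q^{−ρ}/(q−q^{−1}))·[ (q^{ρ−1−iλ−z} − 1)(1 − q^{ρ+1+iλ+z})·f(z+2) − (q^{ρ+iλ−z} − 1)(1 − q^{ρ−iλ+z})·f(z) ]. Then a meromorphic function f on ℂ satisfies Tf = μ_α(ρ)·f (as meromorphic functions) if and only if f satisfies the first order difference equation f(z+2) = [ sin(π(−iλ−α−ρ+z)τ)·sin(π(−iλ+α+ρ+z)τ) / ( sin(π(iλ−ρ+1+z)τ)·sin(π(iλ+ρ+1+z)τ) ) ]·f(z). -/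

import Mathlib

noncomputable section

open Complex

/-- `q^u = exp(2πiτu)`. -/
def qpow (τ u : ℂ) : ℂ := Complex.exp (2 * (Real.pi : ℂ) * Complex.I * τ * u)

/-- The eigenvalue constant `μ_α(ρ) = ( q^ρ(1−q^α) + q^{−ρ}(1−q^{−α}) ) / (q − q^{−1})`. -/
def muEig (τ α ρ : ℂ) : ℂ :=
  (qpow τ ρ * (1 - qpow τ α) + qpow τ (-ρ) * (1 - qpow τ (-α))) / (qpow τ 1 - qpow τ (-1))

/-- The first order difference operator realizing `π_λ(Y_ρ)` for Koornwinder's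
twisted primitive element. -/
def twistOp (τ lam ρ : ℂ) (f : ℂ → ℂ) (z : ℂ) : ℂ :=
  (qpow τ (-ρ) / (qpow τ 1 - qpow τ (-1))) *
    ((qpow τ (ρ - 1 - Complex.I * lam - z) - 1) * (1 - qpow τ (ρ + 1 + Complex.I * lam + z)) *
        f (z + 2) -
      (qpow τ (ρ + Complex.I * lam - z) - 1) * (1 - qpow τ (ρ - Complex.I * lam + z)) * f z)

theorem qm1 (τ u : ℂ) : qpow τ u - 1 =
    Complex.exp ((Real.pi:ℂ)*I*τ*u) * (2*I) * Complex.sin ((Real.pi:ℂ) * u * τ) := by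
  rw [Complex.sin, qpow,
    show -((Real.pi:ℂ) * u * τ) * I = -((Real.pi:ℂ)*I*τ*u) by ring,
    show ((Real.pi:ℂ) * u * τ) * I = ((Real.pi:ℂ)*I*τ*u) by ring,
    Complex.exp_neg,
    show 2*(Real.pi:ℂ)*I*τ*u = ((Real.pi:ℂ)*I*τ*u) + ((Real.pi:ℂ)*I*τ*u) by ring,
    Complex.exp_add]
  have h := Complex.exp_ne_zero ((Real.pi:ℂ)*I*τ*u)
  field_simp
  linear_combination (Complex.exp ((Real.pi:ℂ)*I*τ*u)^2 - 1)
    * Complex.I_sq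

theorem keyprod (τ u v : ℂ) : (qpow τ u - 1) * (qpow τ v - 1) =
    -4 * Complex.exp ((Real.pi:ℂ)*I*τ*(u+v)) * Complex.sin ((Real.pi:ℂ) * u * τ)
      * Complex.sin ((Real.pi:ℂ) * v * τ) := by
  rw [qm1, qm1, show (Real.pi:ℂ)*I*τ*(u+v) = (Real.pi:ℂ)*I*τ*u + (Real.pi:ℂ)*I*τ*v by ring,
    Complex.exp_add]
  linear_combination (4 * Complex.exp ((Real.pi:ℂ)*I*τ*u) * Complex.exp ((Real.pi:ℂ)*I*τ*v) *
    Complex.sin ((Real.pi:ℂ) * u * τ) * Complex.sin ((Real.pi:ℂ) * v * τ)) * Complex.I_sq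

theorem qpow_mul (τ u v : ℂ) : qpow τ u * qpow τ v = qpow τ (u+v) := by
  rw [qpow, qpow, qpow, ← Complex.exp_add]; ring_nf

theorem qpow_zero (τ : ℂ) : qpow τ 0 = 1 := by
  rw [qpow]; simp

theorem key1 (τ lam ρ z : ℂ) :
    qpow τ (-ρ) * ((qpow τ (ρ - 1 - Complex.I * lam - z) - 1) *
      (1 - qpow τ (ρ + 1 + Complex.I * lam + z))) =
    -4 * Complex.sin ((Real.pi : ℂ) * (Complex.I * lam - ρ + 1 + z) * τ) *
      Complex.sin ((Real.pi : ℂ) * (Complex.I * lam + ρ + 1 + z) * τ) := by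
  have hp := keyprod τ (ρ - 1 - Complex.I * lam - z) (ρ + 1 + Complex.I * lam + z)
  rw [show (Real.pi:ℂ) * (ρ - 1 - Complex.I * lam - z) * τ
        = -((Real.pi:ℂ) * (Complex.I * lam - ρ + 1 + z) * τ) by ring,
    Complex.sin_neg,
    show (Real.pi:ℂ) * (ρ + 1 + Complex.I * lam + z) * τ
        = (Real.pi:ℂ) * (Complex.I * lam + ρ + 1 + z) * τ by ring,
    show (Real.pi:ℂ)*I*τ*((ρ - 1 - Complex.I * lam - z) + (ρ + 1 + Complex.I * lam + z))
        = 2 * (Real.pi:ℂ) * Complex.I * τ * ρ by ring,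
    show Complex.exp (2 * (Real.pi:ℂ) * Complex.I * τ * ρ) = qpow τ ρ from rfl] at hp
  have hc : qpow τ (-ρ) * qpow τ ρ = 1 := by
    rw [qpow_mul, show -ρ + ρ = 0 by ring, qpow_zero]
  linear_combination (-(qpow τ (-ρ))) * hp +
    (-4 * Complex.sin ((Real.pi : ℂ) * (Complex.I * lam - ρ + 1 + z) * τ) *
      Complex.sin ((Real.pi : ℂ) * (Complex.I * lam + ρ + 1 + z) * τ)) * hc

theorem key2' (τ lam α ρ z : ℂ) :
    (qpow τ ρ * (1 - qpow τ α) + qpow τ (-ρ) * (1 - qpow τ (-α))) +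
      qpow τ (-ρ) * ((qpow τ (ρ + Complex.I * lam - z) - 1) *
        (1 - qpow τ (ρ - Complex.I * lam + z))) =
    qpow τ (Complex.I * lam - z) *
      ((qpow τ (-(Complex.I * lam) - α - ρ + z) - 1) *
        (qpow τ (-(Complex.I * lam) + α + ρ + z) - 1)) := by
  have e1 : qpow τ (-ρ) * qpow τ (ρ + Complex.I * lam - z) = qpow τ (Complex.I * lam - z) := by
    rw [qpow_mul]; congr 1; ring
  have e2 : qpow τ (-ρ) * (qpow τ (ρ + Complex.I * lam - z) * qpow τ (ρ - Complex.I * lam + z))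
      = qpow τ ρ := by
    rw [qpow_mul, qpow_mul]; congr 1; ring
  have e3 : qpow τ (-ρ) * qpow τ (ρ - Complex.I * lam + z) = qpow τ (z - Complex.I * lam) := by
    rw [qpow_mul]; congr 1; ring
  have e4 : qpow τ (Complex.I * lam - z) * (qpow τ (-(Complex.I * lam) - α - ρ + z) *
      qpow τ (-(Complex.I * lam) + α + ρ + z)) = qpow τ (z - Complex.I * lam) := by
    rw [qpow_mul, qpow_mul]; congr 1; ring
  have e5 : qpow τ (Complex.I * lam - z) * qpow τ (-(Complex.I * lam) - α - ρ + z)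
      = qpow τ (-α - ρ) := by
    rw [qpow_mul]; congr 1; ring
  have e6 : qpow τ (Complex.I * lam - z) * qpow τ (-(Complex.I * lam) + α + ρ + z)
      = qpow τ (α + ρ) := by
    rw [qpow_mul]; congr 1; ring
  have e7 : qpow τ ρ * qpow τ α = qpow τ (α + ρ) := by
    rw [qpow_mul]; congr 1; ring
  have e8 : qpow τ (-ρ) * qpow τ (-α) = qpow τ (-α - ρ) := by
    rw [qpow_mul]; congr 1; ring
  linear_combination -e7 - e8 + e1 - e2 + e3 - e4 + e5 + e6

theorem key2 (τ lam α ρ z : ℂ) :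
    (qpow τ ρ * (1 - qpow τ α) + qpow τ (-ρ) * (1 - qpow τ (-α))) +
      qpow τ (-ρ) * ((qpow τ (ρ + Complex.I * lam - z) - 1) *
        (1 - qpow τ (ρ - Complex.I * lam + z))) =
    -4 * Complex.sin ((Real.pi : ℂ) * (-(Complex.I * lam) - α - ρ + z) * τ) *
      Complex.sin ((Real.pi : ℂ) * (-(Complex.I * lam) + α + ρ + z) * τ) := by
  have hp := keyprod τ (-(Complex.I * lam) - α - ρ + z) (-(Complex.I * lam) + α + ρ + z)
  rw [show (Real.pi:ℂ)*I*τ*((-(Complex.I * lam) - α - ρ + z) + (-(Complex.I * lam) + α + ρ + z))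
        = 2 * (Real.pi:ℂ) * Complex.I * τ * (z - Complex.I * lam) by ring,
    show Complex.exp (2 * (Real.pi:ℂ) * Complex.I * τ * (z - Complex.I * lam))
        = qpow τ (z - Complex.I * lam) from rfl] at hp
  have hc : qpow τ (Complex.I * lam - z) * qpow τ (z - Complex.I * lam) = 1 := by
    rw [qpow_mul, show Complex.I * lam - z + (z - Complex.I * lam) = 0 by ring, qpow_zero]
  linear_combination key2' τ lam α ρ z + qpow τ (Complex.I * lam - z) * hp -
    (4 * Complex.sin ((Real.pi : ℂ) * (-(Complex.I * lam) - α - ρ + z) * τ) *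
      Complex.sin ((Real.pi : ℂ) * (-(Complex.I * lam) + α + ρ + z) * τ)) * hc

theorem hD_ne (τ : ℂ) (hτ : ∀ n : ℤ, 2 * τ ≠ (n : ℂ)) : qpow τ 1 - qpow τ (-1) ≠ 0 := by
  intro h
  rw [sub_eq_zero] at h
  have h2 : qpow τ 1 * qpow τ 1 = 1 := by
    nth_rewrite 2 [h]
    rw [qpow_mul, show (1:ℂ) + -1 = 0 by ring, qpow_zero]
  rw [qpow_mul] at h2
  rw [qpow, Complex.exp_eq_one_iff] at h2
  obtain ⟨n, hn⟩ := h2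
  apply hτ n
  have hne : (2:ℂ) * (Real.pi:ℂ) * I ≠ 0 := by
    simp [Real.pi_ne_zero, Complex.I_ne_zero]
  apply mul_left_cancel₀ hne
  rw [show 2*(Real.pi:ℂ)*I*(2*τ) = 2*(Real.pi:ℂ)*I*τ*(1+1) by ring, hn]
  ring

/-- A meromorphic function `f` is an eigenfunction of `π_λ(Y_ρ)` with eigenvalue
`μ_α(ρ)` (as meromorphic functions, i.e. away from the zeros of the denominators)
if and only if it satisfies the first order difference equation
`f(z+2) = [sin(π(−iλ−α−ρ+z)τ)·sin(π(−iλ+α+ρ+z)τ) /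
  (sin(π(iλ−ρ+1+z)τ)·sin(π(iλ+ρ+1+z)τ))]·f(z)`. -/
theorem twisted_primitive_eigenfunction_iff (τ : ℂ) (hτ : ∀ n : ℤ, 2 * τ ≠ (n : ℂ))
    (lam α ρ : ℂ) (f : ℂ → ℂ) (hf : MeromorphicOn f Set.univ) :
    (∀ z : ℂ,
        Complex.sin ((Real.pi : ℂ) * (Complex.I * lam - ρ + 1 + z) * τ) ≠ 0 →
        Complex.sin ((Real.pi : ℂ) * (Complex.I * lam + ρ + 1 + z) * τ) ≠ 0 →
        twistOp τ lam ρ f z = muEig τ α ρ * f z) ↔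
    (∀ z : ℂ,
        Complex.sin ((Real.pi : ℂ) * (Complex.I * lam - ρ + 1 + z) * τ) ≠ 0 →
        Complex.sin ((Real.pi : ℂ) * (Complex.I * lam + ρ + 1 + z) * τ) ≠ 0 →
        f (z + 2) =
          (Complex.sin ((Real.pi : ℂ) * (-(Complex.I * lam) - α - ρ + z) * τ) *
              Complex.sin ((Real.pi : ℂ) * (-(Complex.I * lam) + α + ρ + z) * τ)) /
            (Complex.sin ((Real.pi : ℂ) * (Complex.I * lam - ρ + 1 + z) * τ) *
              Complex.sin ((Real.pi : ℂ) * (Complex.I * lam + ρ + 1 + z) * τ)) * f z) := by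
  have hD := hD_ne τ hτ
  constructor
  · intro h z hS1 hS2
    have h1 := h z hS1 hS2
    rw [twistOp, muEig, div_mul_eq_mul_div, div_mul_eq_mul_div, div_eq_div_iff hD hD] at h1
    have h2 := mul_right_cancel₀ hD h1
    have hS12 : Complex.sin ((Real.pi : ℂ) * (Complex.I * lam - ρ + 1 + z) * τ) *
        Complex.sin ((Real.pi : ℂ) * (Complex.I * lam + ρ + 1 + z) * τ) ≠ 0 :=
      mul_ne_zero hS1 hS2
    rw [div_mul_eq_mul_div, eq_div_iff hS12]
    linear_combination (f (z+2)/4) * key1 τ lam ρ z - (f z/4) * key2 τ lam α ρ z - (1/4) * h2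
  · intro h z hS1 hS2
    have h1 := h z hS1 hS2
    have hS12 : Complex.sin ((Real.pi : ℂ) * (Complex.I * lam - ρ + 1 + z) * τ) *
        Complex.sin ((Real.pi : ℂ) * (Complex.I * lam + ρ + 1 + z) * τ) ≠ 0 :=
      mul_ne_zero hS1 hS2
    rw [div_mul_eq_mul_div, eq_div_iff hS12] at h1
    rw [twistOp, muEig, div_mul_eq_mul_div, div_mul_eq_mul_div, div_eq_div_iff hD hD]
    linear_combination ((qpow τ 1 - qpow τ (-1)) * f (z+2)) * key1 τ lam ρ z -
      ((qpow τ 1 - qpow τ (-1)) * f z) * key2 τ lam α ρ z -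
      (4 * (qpow τ 1 - qpow τ (-1))) * h1
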